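/- arXiv:2506.11579 — 3 statements merged into one kernel-verified Lean document; each statement's English description precedes it below -/
import Mathlib

section
/- For every ε ∈ (0, 3/10) and every s ∈ [0, π/12], one has 1/2 ≤ F_ε(s) < 4/5. -/
/-- For a C² cut-off χ with 0 ≤ χ ≤ 1 on [0,π/12], χ = 1 on [0,π/36] and χ = 0 on
[π/18,π/12], the glued warping function
F_ε(s) = χ(s)·ε·cosh(s − log ε) + (1 − χ(s))·sin(s + π/6)
satisfies 1/2 ≤ F_ε(s) < 4/5 for every ε ∈ (0, 3/10) and s ∈ [0, π/12]. -/
theorem stmt_3 (χ : ℝ → ℝ) (hχ : ContDiff ℝ 2 χ)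
    (hχ01 : ∀ s ∈ Set.Icc (0 : ℝ) (Real.pi / 12), 0 ≤ χ s ∧ χ s ≤ 1)
    (hχ1 : ∀ s ∈ Set.Icc (0 : ℝ) (Real.pi / 36), χ s = 1)
    (hχ0 : ∀ s ∈ Set.Icc (Real.pi / 18) (Real.pi / 12), χ s = 0)
    (ε : ℝ) (hε : ε ∈ Set.Ioo (0 : ℝ) (3 / 10))
    (s : ℝ) (hs : s ∈ Set.Icc (0 : ℝ) (Real.pi / 12)) :
    1 / 2 ≤ χ s * (ε * Real.cosh (s + (-Real.log ε)))
              + (1 - χ s) * Real.sin (s + Real.pi / 6) ∧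
    χ s * (ε * Real.cosh (s + (-Real.log ε)))
        + (1 - χ s) * Real.sin (s + Real.pi / 6) < 4 / 5 := by
  obtain ⟨hε0, hε3⟩ := hε
  obtain ⟨hs0, hs1⟩ := hs
  obtain ⟨hc0, hc1⟩ := hχ01 s ⟨hs0, hs1⟩
  have hpi4 : Real.pi ≤ 4 := Real.pi_le_four
  have hs13 : s ≤ 1/3 := le_trans hs1 (by linarith)
  -- f = (exp s + ε² exp (-s)) / 2
  have hf : ε * Real.cosh (s + (-Real.log ε))
      = (Real.exp s + ε^2 * Real.exp (-s)) / 2 := by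
    rw [Real.cosh_eq]
    have h1 : Real.exp (s + -Real.log ε) = Real.exp s / ε := by
      rw [Real.exp_add, Real.exp_neg, Real.exp_log hε0]; ring
    have h2 : Real.exp (-(s + -Real.log ε)) = ε * Real.exp (-s) := by
      rw [show -(s + -Real.log ε) = -s + Real.log ε by ring,
        Real.exp_add, Real.exp_log hε0]; ring
    rw [h1, h2]; field_simp
  have hes1 : 1 ≤ Real.exp s := Real.one_le_exp hs0
  have hens : Real.exp (-s) ≤ 1 := Real.exp_le_one_iff.2 (by linarith)
  have hexp13 : Real.exp s < 1.4 := by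
    have h1 : Real.exp s ≤ Real.exp (1/3) := Real.exp_le_exp.2 hs13
    have h3 : Real.exp (1/3) ^ 3 = Real.exp 1 := by
      rw [← Real.exp_nat_mul]; norm_num
    have he : Real.exp 1 < 2.7182818286 := Real.exp_one_lt_d9
    by_contra hcon
    push_neg at hcon
    have h4 : (1.4:ℝ)^3 ≤ Real.exp (1/3) ^ 3 :=
      pow_le_pow_left₀ (by norm_num) (le_trans hcon h1) 3
    rw [h3] at h4
    norm_num at h4
    linarith
  have henspos : 0 < Real.exp (-s) := Real.exp_pos _
  have hflo : 1/2 ≤ ε * Real.cosh (s + (-Real.log ε)) := by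
    rw [hf]; nlinarith
  have hfhi : ε * Real.cosh (s + (-Real.log ε)) < 4/5 := by
    rw [hf]; nlinarith
  -- h = sin(s + π/6) bounds
  have hpi : 0 < Real.pi := Real.pi_pos
  have hmem1 : s + Real.pi/6 ∈ Set.Icc (-(Real.pi/2)) (Real.pi/2) := by
    constructor <;> [linarith; linarith]
  have hmem2 : Real.pi/6 ∈ Set.Icc (-(Real.pi/2)) (Real.pi/2) := by
    constructor <;> [linarith; linarith]
  have hmem3 : Real.pi/4 ∈ Set.Icc (-(Real.pi/2)) (Real.pi/2) := by
    constructor <;> [linarith; linarith]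
  have hhlo : 1/2 ≤ Real.sin (s + Real.pi/6) := by
    have := Real.strictMonoOn_sin.monotoneOn hmem2 hmem1 (by linarith)
    rwa [Real.sin_pi_div_six] at this
  have hhhi : Real.sin (s + Real.pi/6) < 4/5 := by
    have h1 := Real.strictMonoOn_sin.monotoneOn hmem1 hmem3 (by linarith)
    rw [Real.sin_pi_div_four] at h1
    have h2 : Real.sqrt 2 < 8/5 := by
      rw [show (8:ℝ)/5 = Real.sqrt ((8/5)^2) by rw [Real.sqrt_sq]; norm_num]
      exact Real.sqrt_lt_sqrt (by norm_num) (by norm_num)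
    linarith
  constructor
  · nlinarith
  · rcases eq_or_lt_of_le hc0 with h | h
    · rw [← h]; norm_num; linarith
    · nlinarith [mul_lt_mul_of_pos_left hfhi h,
        mul_le_mul_of_nonneg_left hhhi.le (by linarith : (0:ℝ) ≤ 1 - χ s)]
end

section
/- There exist constants κ₁, κ₂ > 0 independent of ε such that for every ε ∈ (0, 3/10) and every s ∈ [0, π/12]: −F_ε″(s)/F_ε(s) ≥ −κ₁ and (1 − (F_ε′(s))²)/(F_ε(s))² ≥ −κ₂. (These two quantities are the sectional-curvature expressions of the warped-product metric ds² ⊕ F_ε(s)² g_{S^{n−1}} in the plane containing the radial direction and in a plane tangent to the sphere factor, respectively; hence the sectional curvature of the connecting region of the hyperbolic dumbbell is uniformly bounded below in ε.) -/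
private lemma prod_bd {u v U V : ℝ} (hu : |u| ≤ U) (hv : |v| ≤ V) :
    -(U * V) ≤ u * v ∧ u * v ≤ U * V := by
  have h1 : |u * v| ≤ U * V := by
    rw [abs_mul]
    exact mul_le_mul hu hv (abs_nonneg _) (le_trans (abs_nonneg _) hu)
  exact abs_le.mp h1

set_option maxHeartbeats 1000000 in
/-- The sectional-curvature expressions of the warped-product metric with warping
function F_ε are uniformly bounded below on [0, π/12], uniformly in ε ∈ (0, 3/10). -/
theorem stmt_6 (χ : ℝ → ℝ) (hχ : ContDiff ℝ 2 χ)
    (hχ01 : ∀ s ∈ Set.Icc (0 : ℝ) (Real.pi / 12), 0 ≤ χ s ∧ χ s ≤ 1)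
    (hχ1 : ∀ s ∈ Set.Icc (0 : ℝ) (Real.pi / 36), χ s = 1)
    (hχ0 : ∀ s ∈ Set.Icc (Real.pi / 18) (Real.pi / 12), χ s = 0)
    (F : ℝ → ℝ → ℝ)
    (hF : ∀ ε s, F ε s = χ s * (ε * Real.cosh (s + (-Real.log ε)))
            + (1 - χ s) * Real.sin (s + Real.pi / 6)) :
    ∃ κ₁ > (0 : ℝ), ∃ κ₂ > (0 : ℝ),
      ∀ ε ∈ Set.Ioo (0 : ℝ) (3 / 10), ∀ s ∈ Set.Icc (0 : ℝ) (Real.pi / 12),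
        -(deriv (deriv (F ε)) s) / F ε s ≥ -κ₁ ∧
        (1 - (deriv (F ε) s) ^ 2) / (F ε s) ^ 2 ≥ -κ₂ := by
  have hπ := Real.pi_pos
  have hπ4 := Real.pi_le_four
  -- regularity of χ
  have hχd : Differentiable ℝ χ := hχ.differentiable (by norm_num)
  have hχ2 : ContDiff ℝ (1 + 1) χ := by norm_num; exact hχ
  have hχ1' : ContDiff ℝ 1 (deriv χ) := (contDiff_succ_iff_deriv.mp hχ2).2.2
  have hχ'd : Differentiable ℝ (deriv χ) := hχ1'.differentiable (by norm_num)
  have hχ''c : Continuous (deriv (deriv χ)) := (contDiff_one_iff_deriv.mp hχ1').2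
  -- bounds on deriv χ and deriv² χ on the compact interval
  obtain ⟨M1, hM1⟩ := (isCompact_Icc (a := (0:ℝ)) (b := Real.pi/12)).exists_bound_of_continuousOn
    hχ1'.continuous.continuousOn
  obtain ⟨M2, hM2⟩ := (isCompact_Icc (a := (0:ℝ)) (b := Real.pi/12)).exists_bound_of_continuousOn
    hχ''c.continuousOn
  set M : ℝ := max M1 M2 with hMdef
  have hMnn : 0 ≤ M := le_trans (abs_nonneg _)
    (le_trans (hM1 0 ⟨le_rfl, by positivity⟩) (le_max_left _ _))
  have hM1' : ∀ t ∈ Set.Icc (0:ℝ) (Real.pi/12), |deriv χ t| ≤ M :=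
    fun t ht => le_trans (hM1 t ht) (le_max_left _ _)
  have hM2' : ∀ t ∈ Set.Icc (0:ℝ) (Real.pi/12), |deriv (deriv χ) t| ≤ M :=
    fun t ht => le_trans (hM2 t ht) (le_max_right _ _)
  refine ⟨20 * (M + 1), by positivity, 4 * (8 * (M + 1))^2 + 4, by positivity, ?_⟩
  intro ε hε s hs
  obtain ⟨hε0, hε3⟩ := hε
  obtain ⟨hs0, hs1⟩ := hs
  set L : ℝ := -Real.log ε with hLdef
  -- explicit form of F ε
  have hFfun : F ε = fun t => χ t * (ε * Real.cosh (t + L)) + (1 - χ t) * Real.sin (t + Real.pi/6) := by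
    funext t; rw [hLdef]; exact hF ε t
  -- basic derivatives
  have hc : ∀ t : ℝ, HasDerivAt (fun u => ε * Real.cosh (u + L)) (ε * Real.sinh (t + L)) t :=
    fun t => by simpa using (((hasDerivAt_id t).add_const L).cosh.const_mul ε)
  have hc' : ∀ t : ℝ, HasDerivAt (fun u => ε * Real.sinh (u + L)) (ε * Real.cosh (t + L)) t :=
    fun t => by simpa using (((hasDerivAt_id t).add_const L).sinh.const_mul ε)
  have hh : ∀ t : ℝ, HasDerivAt (fun u => Real.sin (u + Real.pi/6)) (Real.cos (t + Real.pi/6)) t :=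
    fun t => by simpa using (((hasDerivAt_id t).add_const (Real.pi/6)).sin)
  have hh' : ∀ t : ℝ, HasDerivAt (fun u => Real.cos (u + Real.pi/6)) (-Real.sin (t + Real.pi/6)) t :=
    fun t => by simpa using (((hasDerivAt_id t).add_const (Real.pi/6)).cos)
  -- first derivative of F ε
  have hD1 : ∀ t : ℝ, HasDerivAt (F ε)
      (deriv χ t * (ε * Real.cosh (t + L)) + χ t * (ε * Real.sinh (t + L))
        - deriv χ t * Real.sin (t + Real.pi/6) + (1 - χ t) * Real.cos (t + Real.pi/6)) t := by
    intro t
    rw [hFfun]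
    have h1 := ((hχd t).hasDerivAt.mul (hc t)).add
      (((hasDerivAt_const t (1:ℝ)).sub (hχd t).hasDerivAt).mul (hh t))
    exact h1.congr_deriv (by simp only [Pi.sub_apply]; ring)
  have hderiv1 : deriv (F ε) = fun t =>
      deriv χ t * (ε * Real.cosh (t + L)) + χ t * (ε * Real.sinh (t + L))
        - deriv χ t * Real.sin (t + Real.pi/6) + (1 - χ t) * Real.cos (t + Real.pi/6) :=
    funext fun t => (hD1 t).deriv
  -- second derivative of F ε
  have hD2 : HasDerivAt (deriv (F ε))
      (deriv (deriv χ) s * (ε * Real.cosh (s + L) - Real.sin (s + Real.pi/6))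
        + 2 * deriv χ s * (ε * Real.sinh (s + L) - Real.cos (s + Real.pi/6))
        + χ s * (ε * Real.cosh (s + L))
        - (1 - χ s) * Real.sin (s + Real.pi/6)) s := by
    rw [hderiv1]
    have h1 := ((((hχ'd s).hasDerivAt.mul (hc s)).add ((hχd s).hasDerivAt.mul (hc' s))).sub
        ((hχ'd s).hasDerivAt.mul (hh s))).add
      (((hasDerivAt_const s (1:ℝ)).sub (hχd s).hasDerivAt).mul (hh' s))
    exact h1.congr_deriv (by simp only [Pi.sub_apply]; ring)
  have hd2 : deriv (deriv (F ε)) s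
      = deriv (deriv χ) s * (ε * Real.cosh (s + L) - Real.sin (s + Real.pi/6))
        + 2 * deriv χ s * (ε * Real.sinh (s + L) - Real.cos (s + Real.pi/6))
        + χ s * (ε * Real.cosh (s + L))
        - (1 - χ s) * Real.sin (s + Real.pi/6) := hD2.deriv
  have hd1 : deriv (F ε) s
      = deriv χ s * (ε * Real.cosh (s + L)) + χ s * (ε * Real.sinh (s + L))
        - deriv χ s * Real.sin (s + Real.pi/6) + (1 - χ s) * Real.cos (s + Real.pi/6) :=
    (hD1 s).deriv
  -- numeric bounds
  have hs12 : s ≤ 1 := le_trans hs1 (by linarith)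
  have hexp_s_le : Real.exp s ≤ 3 :=
    le_trans (Real.exp_le_exp.mpr hs12) (le_of_lt (lt_trans Real.exp_one_lt_d9 (by norm_num)))
  have hexp_s_ge : 1 ≤ Real.exp s := by simpa using Real.exp_le_exp.mpr hs0
  have hexp_ns_le : Real.exp (-s) ≤ 1 := by
    simpa using Real.exp_le_exp.mpr (neg_nonpos.mpr hs0)
  have hexp_ns_pos : 0 < Real.exp (-s) := Real.exp_pos _
  have hε2 : ε^2 ≤ 9/100 := by
    have q : (0:ℝ) < (3/10 - ε) * (3/10 + ε) := mul_pos (by linarith) (by linarith)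
    linarith only [q]
  have hεexp : Real.exp L = ε⁻¹ := by rw [hLdef, Real.exp_neg, Real.exp_log hε0]
  have hεexp2 : Real.exp (-L) = ε := by rw [hLdef, neg_neg, Real.exp_log hε0]
  have hεne : ε ≠ 0 := ne_of_gt hε0
  -- explicit formulas for ε·cosh, ε·sinh
  have hcosh_eq : ε * Real.cosh (s + L) = (Real.exp s + ε^2 * Real.exp (-s)) / 2 := by
    rw [Real.cosh_eq, neg_add, Real.exp_add, Real.exp_add, hεexp, hεexp2]
    field_simp
  have hsinh_eq : ε * Real.sinh (s + L) = (Real.exp s - ε^2 * Real.exp (-s)) / 2 := by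
    rw [Real.sinh_eq, neg_add, Real.exp_add, Real.exp_add, hεexp, hεexp2]
    field_simp
  have hq1 : ε^2 * Real.exp (-s) ≤ 1 := by
    have := mul_le_mul hε2 hexp_ns_le (le_of_lt hexp_ns_pos) (by norm_num)
    linarith only [this]
  have hq0 : 0 ≤ ε^2 * Real.exp (-s) := mul_nonneg (sq_nonneg _) (le_of_lt hexp_ns_pos)
  have hc_le : ε * Real.cosh (s + L) ≤ 2 := by
    rw [hcosh_eq]; linarith only [hexp_s_le, hq1]
  have hc_ge : 1/2 ≤ ε * Real.cosh (s + L) := by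
    rw [hcosh_eq]; linarith only [hexp_s_ge, hq0]
  have hs_le : ε * Real.sinh (s + L) ≤ 2 := by
    rw [hsinh_eq]; linarith only [hexp_s_le, hq0]
  have hs_ge : -2 ≤ ε * Real.sinh (s + L) := by
    rw [hsinh_eq]; linarith only [hexp_s_ge, hq1]
  -- bounds on sin/cos
  have hsin_le : Real.sin (s + Real.pi/6) ≤ 1 := Real.sin_le_one _
  have hcos_le : Real.cos (s + Real.pi/6) ≤ 1 := Real.cos_le_one _
  have hcos_ge : -1 ≤ Real.cos (s + Real.pi/6) := Real.neg_one_le_cos _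
  have hsin_ge : 1/2 ≤ Real.sin (s + Real.pi/6) := by
    have h1 : Real.sin (Real.pi/6) ≤ Real.sin (s + Real.pi/6) := by
      apply Real.strictMonoOn_sin.monotoneOn
      · constructor <;> [linarith; linarith]
      · constructor <;> [linarith; linarith]
      · linarith
    rwa [Real.sin_pi_div_six] at h1
  -- bounds on χ and its derivatives at s
  obtain ⟨hχge, hχle⟩ := hχ01 s ⟨hs0, hs1⟩
  have habs_b : |deriv χ s| ≤ M := hM1' s ⟨hs0, hs1⟩
  have habs_a : |deriv (deriv χ) s| ≤ M := hM2' s ⟨hs0, hs1⟩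
  -- abs bounds of the pieces
  have habs_cmh : |ε * Real.cosh (s + L) - Real.sin (s + Real.pi/6)| ≤ 3/2 := by
    rw [abs_le]; constructor <;> linarith
  have habs_smh : |ε * Real.sinh (s + L) - Real.cos (s + Real.pi/6)| ≤ 3 := by
    rw [abs_le]; constructor <;> linarith
  have habs_c : |ε * Real.cosh (s + L)| ≤ 2 := by
    rw [abs_le]; constructor <;> linarith
  have habs_s' : |ε * Real.sinh (s + L)| ≤ 2 := by
    rw [abs_le]; constructor <;> linarith
  have habs_x : |χ s| ≤ 1 := by rw [abs_le]; constructor <;> linarith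
  have habs_sin : |Real.sin (s + Real.pi/6)| ≤ 1 := by
    rw [abs_le]; constructor <;> linarith
  have habs_cos : |Real.cos (s + Real.pi/6)| ≤ 1 := by
    rw [abs_le]; constructor <;> linarith
  -- product bounds
  have p1 := prod_bd habs_a habs_cmh
  have p2 := prod_bd habs_b habs_smh
  have p3 := prod_bd habs_x habs_c
  have p4 := prod_bd habs_b habs_c
  have p5 := prod_bd habs_x habs_s'
  have p6 := prod_bd habs_b habs_sin
  have p8 := prod_bd habs_x habs_cos
  -- lower bound for F ε s
  have hFval : F ε s = χ s * (ε * Real.cosh (s + L)) + (1 - χ s) * Real.sin (s + Real.pi/6) := by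
    rw [hLdef]; exact hF ε s
  have hFge : 1/2 ≤ F ε s := by
    rw [hFval]
    have q1 : (0:ℝ) ≤ χ s * (ε * Real.cosh (s + L) - 1/2) :=
      mul_nonneg hχge (by linarith)
    have q2 : (0:ℝ) ≤ (1 - χ s) * (Real.sin (s + Real.pi/6) - 1/2) :=
      mul_nonneg (by linarith) (by linarith)
    linarith only [q1, q2]
  have hFpos : 0 < F ε s := by linarith
  have hnonneg1 : (0:ℝ) ≤ (1 - χ s) * Real.sin (s + Real.pi/6) :=
    mul_nonneg (by linarith) (by linarith)
  constructor
  · -- first curvature bound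
    rw [ge_iff_le, hd2, le_div_iff₀ hFpos]
    have p7 : 10 * (M + 1) ≤ 20 * (M + 1) * F ε s := by
      have q : (0:ℝ) ≤ (M + 1) * (F ε s - 1/2) :=
        mul_nonneg (by linarith) (by linarith)
      linarith only [q]
    linarith only [p1.2, p2.2, p3.2, hnonneg1, p7, hMnn]
  · -- second curvature bound
    have hF2 : 1/4 ≤ (F ε s)^2 := by
      have q : (0:ℝ) ≤ (F ε s - 1/2) * (F ε s + 1/2) :=
        mul_nonneg (by linarith) (by linarith)
      linarith only [q]
    have hF2pos : 0 < (F ε s)^2 := by positivity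
    have hub : deriv (F ε) s ≤ 8 * (M + 1) := by
      rw [hd1]
      linarith only [p4.2, p5.2, p6.1, p8.1, hcos_le, hMnn]
    have hlb : -(8 * (M + 1)) ≤ deriv (F ε) s := by
      rw [hd1]
      linarith only [p4.1, p5.1, p6.2, p8.2, hcos_ge, hMnn]
    have hd1sq : (deriv (F ε) s)^2 ≤ (8 * (M + 1))^2 := by
      have q : (0:ℝ) ≤ (8 * (M + 1) - deriv (F ε) s) * (8 * (M + 1) + deriv (F ε) s) :=
        mul_nonneg (by linarith) (by linarith)
      linarith only [q]
    rw [ge_iff_le, le_div_iff₀ hF2pos]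
    have q : (0:ℝ) ≤ (4 * (8 * (M + 1))^2 + 4) * ((F ε s)^2 - 1/4) :=
      mul_nonneg (by positivity) (by linarith)
    linarith only [q, hd1sq]
end

section
/- For every integer n ≥ 2 and every ε ∈ (0,1): ε^{n−1}·∫₀^{−log ε} (cosh r)^{n−1} dr ≤ (2^{(n+1)/2}/(π(n−1)))·∫_{π/4}^{3π/4} (sin r)^{n−1} dr. (Dividing both sides by (log ε)²·∫_{π/4}^{3π/4}(sin r)^{n−1} dr yields the bound C(n)/|log ε|² for the Rayleigh–Ritz quotient of the test co-closed p-form φ₁ on the hyperbolic dumbbell, with n = m − p.) -/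
open Real intervalIntegral

/-- For every integer n ≥ 2 and ε ∈ (0,1):
ε^{n−1}·∫₀^{−log ε} cosh(r)^{n−1} dr
  ≤ (2^{(n+1)/2}/(π(n−1)))·∫_{π/4}^{3π/4} sin(r)^{n−1} dr. -/
theorem stmt_11 (n : ℕ) (hn : 2 ≤ n) (ε : ℝ) (hε : ε ∈ Set.Ioo (0 : ℝ) 1) :
    ε ^ (n - 1) * ∫ r in (0 : ℝ)..(-Real.log ε), (Real.cosh r) ^ (n - 1)
      ≤ ((2 : ℝ) ^ (((n : ℝ) + 1) / 2) / (Real.pi * ((n : ℝ) - 1)))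
          * ∫ r in (Real.pi / 4)..(3 * Real.pi / 4), (Real.sin r) ^ (n - 1) := by
  obtain ⟨hε0, hε1⟩ := hε
  have hπ := Real.pi_pos
  set k : ℕ := n - 1 with hkdef
  have hk1 : 1 ≤ k := by omega
  have hk0 : (0:ℝ) < k := by exact_mod_cast hk1
  have hkcast : ((n : ℝ) - 1) = (k : ℝ) := by
    have : (k : ℝ) = (n : ℝ) - 1 := by
      rw [hkdef]; push_cast [Nat.cast_sub (by omega : 1 ≤ n)]; ring
    linarith
  rw [hkcast]
  set L : ℝ := -Real.log ε with hLdef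
  have hL0 : 0 ≤ L := by
    have := Real.log_nonpos (le_of_lt hε0) (le_of_lt hε1)
    simp only [hLdef]; linarith
  -- Bound on the LHS
  have hcosh : ∀ x ∈ Set.Icc (0:ℝ) L, Real.cosh x ^ k ≤ Real.exp ((k:ℝ) * x) := by
    intro x hx
    rw [Real.exp_nat_mul]
    apply pow_le_pow_left₀ ((Real.cosh_pos x).le)
    rw [Real.cosh_eq]
    have : Real.exp (-x) ≤ Real.exp x := Real.exp_le_exp.mpr (by linarith [hx.1])
    linarith
  have h1 : ∫ r in (0:ℝ)..L, Real.cosh r ^ k ≤ ∫ r in (0:ℝ)..L, Real.exp ((k:ℝ) * r) := by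
    apply intervalIntegral.integral_mono_on hL0
    · exact (Real.continuous_cosh.pow k).intervalIntegrable _ _
    · exact (Real.continuous_exp.comp (continuous_const.mul continuous_id)).intervalIntegrable _ _
    · exact hcosh
  have h2 : ∫ r in (0:ℝ)..L, Real.exp ((k:ℝ) * r) = ((k:ℝ))⁻¹ * (Real.exp ((k:ℝ) * L) - 1) := by
    rw [intervalIntegral.integral_comp_mul_left (fun x => Real.exp x) (ne_of_gt hk0)]
    simp [integral_exp]
  have hexpL : Real.exp ((k:ℝ) * L) = (ε ^ k)⁻¹ := by
    rw [hLdef, mul_neg, Real.exp_neg, Real.exp_nat_mul, Real.exp_log hε0]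
  have hεk : (0:ℝ) < ε ^ k := pow_pos hε0 k
  have hLHS : ε ^ k * ∫ r in (0:ℝ)..L, Real.cosh r ^ k ≤ 1 / (k:ℝ) := by
    have h3 : ε ^ k * ∫ r in (0:ℝ)..L, Real.cosh r ^ k
        ≤ ε ^ k * (((k:ℝ))⁻¹ * (Real.exp ((k:ℝ) * L) - 1)) := by
      rw [← h2]; exact mul_le_mul_of_nonneg_left h1 (le_of_lt hεk)
    rw [hexpL] at h3
    have h4 : ε ^ k * (((k:ℝ))⁻¹ * ((ε ^ k)⁻¹ - 1)) = (1 - ε ^ k) / (k:ℝ) := by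
      field_simp
    rw [h4] at h3
    have h5 : (1 - ε ^ k) / (k:ℝ) ≤ 1 / (k:ℝ) := by gcongr; linarith
    linarith
  -- Bound on the RHS
  have hsin : ∀ x ∈ Set.Icc (Real.pi/4) (3*Real.pi/4), Real.sqrt 2 / 2 ≤ Real.sin x := by
    intro x hx
    rw [← Real.cos_pi_div_two_sub, ← Real.cos_abs]
    have h1 : |Real.pi/2 - x| ≤ Real.pi/4 :=
      abs_le.mpr ⟨by linarith [hx.2], by linarith [hx.1]⟩
    calc Real.sqrt 2 / 2 = Real.cos (Real.pi/4) := Real.cos_pi_div_four.symm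
      _ ≤ Real.cos |Real.pi/2 - x| :=
          Real.cos_le_cos_of_nonneg_of_le_pi (abs_nonneg _) (by linarith) h1
  have hInt : Real.pi/2 * (Real.sqrt 2 / 2) ^ k
      ≤ ∫ r in (Real.pi/4)..(3*Real.pi/4), Real.sin r ^ k := by
    have h := intervalIntegral.integral_mono_on (a := Real.pi/4) (b := 3*Real.pi/4)
      (μ := MeasureTheory.volume)
      (f := fun _ => (Real.sqrt 2 / 2) ^ k) (g := fun x => Real.sin x ^ k)
      (by linarith) intervalIntegrable_const
      ((Real.continuous_sin.pow k).intervalIntegrable _ _)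
      (fun x hx => pow_le_pow_left₀ (by positivity) (hsin x hx) k)
    rwa [intervalIntegral.integral_const, smul_eq_mul,
      show 3*Real.pi/4 - Real.pi/4 = Real.pi/2 by ring] at h
  -- The key constant identity
  have hs2 : Real.sqrt 2 / 2 = (2:ℝ) ^ (-(1:ℝ)/2) := by
    rw [show (-(1:ℝ)/2) = -(1/2) by ring, Real.rpow_neg (by norm_num), ← Real.sqrt_eq_rpow]
    rw [inv_eq_one_div, div_eq_div_iff (by positivity) (by norm_num)]
    rw [one_mul, Real.mul_self_sqrt (by norm_num)]
  have h2pow : (2:ℝ) ^ (((n:ℝ)+1)/2) * (Real.sqrt 2 / 2) ^ k = 2 := by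
    rw [hs2, ← Real.rpow_natCast ((2:ℝ) ^ (-(1:ℝ)/2)) k, ← Real.rpow_mul (by norm_num),
      ← Real.rpow_add (by norm_num : (0:ℝ) < 2)]
    rw [show (k:ℝ) = (n:ℝ) - 1 from hkcast.symm]
    rw [show ((n:ℝ)+1)/2 + (-(1:ℝ)/2) * ((n:ℝ) - 1) = 1 by ring, Real.rpow_one]
  have hEq : (2:ℝ) ^ (((n:ℝ)+1)/2) / (Real.pi * (k:ℝ))
      * (Real.pi/2 * (Real.sqrt 2 / 2) ^ k) = 1 / (k:ℝ) := by
    have hre : (2:ℝ) ^ (((n:ℝ)+1)/2) / (Real.pi * (k:ℝ))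
        * (Real.pi/2 * (Real.sqrt 2 / 2) ^ k)
        = ((2:ℝ) ^ (((n:ℝ)+1)/2) * (Real.sqrt 2 / 2) ^ k)
            * (Real.pi / (2 * (Real.pi * (k:ℝ)))) := by ring
    rw [hre, h2pow]
    field_simp
  have hC : (0:ℝ) ≤ (2:ℝ) ^ (((n:ℝ)+1)/2) / (Real.pi * (k:ℝ)) := by positivity
  calc ε ^ k * ∫ r in (0:ℝ)..L, Real.cosh r ^ k ≤ 1 / (k:ℝ) := hLHS
    _ = (2:ℝ) ^ (((n:ℝ)+1)/2) / (Real.pi * (k:ℝ))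
          * (Real.pi/2 * (Real.sqrt 2 / 2) ^ k) := hEq.symm
    _ ≤ (2:ℝ) ^ (((n:ℝ)+1)/2) / (Real.pi * (k:ℝ))
          * ∫ r in (Real.pi/4)..(3*Real.pi/4), Real.sin r ^ k :=
        mul_le_mul_of_nonneg_left hInt hC
end
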